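/- Let A₁ be SPD, M SPD, and B a matrix satisfying uᵀBᵀM⁻¹Bu ≤ d·uᵀA₁u for all u. Then the operator norm of A₁⁻¹Bᵀ satisfies ‖A₁⁻¹Bᵀ‖² ≤ d·λ_max(M)/λ_min(A₁). -/
import Mathlib


open Matrix

section Aux

variable {m : ℕ}

private lemma dot_mulVec_unitary (U : Matrix (Fin m) (Fin m) ℝ)
    (x w : Fin m → ℝ) :
    x ⬝ᵥ (U *ᵥ w) = (star U *ᵥ x) ⬝ᵥ w := by
  rw [Matrix.dotProduct_mulVec, Matrix.star_eq_conjTranspose,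
    Matrix.conjTranspose_eq_transpose_of_trivial, Matrix.mulVec_transpose]

private lemma quad_diag_eq (U : Matrix (Fin m) (Fin m) ℝ) (g x : Fin m → ℝ) :
    x ⬝ᵥ (U * Matrix.diagonal g * star U) *ᵥ x
      = ∑ i, g i * ((star U *ᵥ x) i) ^ 2 := by
  set y : Fin m → ℝ := star U *ᵥ x with hy
  have : (U * Matrix.diagonal g * star U) *ᵥ x = U *ᵥ (Matrix.diagonal g *ᵥ y) := by
    rw [hy, Matrix.mulVec_mulVec, Matrix.mulVec_mulVec]
  rw [this, dot_mulVec_unitary, ← hy]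
  simp only [dotProduct, Matrix.mulVec_diagonal]
  exact Finset.sum_congr rfl fun i _ => by ring

private lemma dot_self_unitary {U : Matrix (Fin m) (Fin m) ℝ}
    (hU : U ∈ Matrix.unitaryGroup (Fin m) ℝ) (x : Fin m → ℝ) :
    (star U *ᵥ x) ⬝ᵥ (star U *ᵥ x) = x ⬝ᵥ x := by
  have h1 : U * star U = 1 := Matrix.mem_unitaryGroup_iff.mp hU
  calc (star U *ᵥ x) ⬝ᵥ (star U *ᵥ x)
      = x ⬝ᵥ (U *ᵥ (star U *ᵥ x)) := (dot_mulVec_unitary U x _).symm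
    _ = x ⬝ᵥ x := by rw [Matrix.mulVec_mulVec, h1, Matrix.one_mulVec]

private lemma ofReal_comp (f : Fin m → ℝ) :
    (RCLike.ofReal ∘ f : Fin m → ℝ) = f := by
  funext i; simp

/-- lower bound on the quadratic form from a lower bound on eigenvalues -/
private lemma quad_lower {A : Matrix (Fin m) (Fin m) ℝ} (hA : A.IsHermitian)
    {c : ℝ} (hc : ∀ i, c ≤ hA.eigenvalues i) (x : Fin m → ℝ) :
    c * (x ⬝ᵥ x) ≤ x ⬝ᵥ A *ᵥ x := by
  set U : Matrix (Fin m) (Fin m) ℝ := ↑hA.eigenvectorUnitary with hUdef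
  have hspec := hA.spectral_theorem
  rw [ofReal_comp] at hspec
  have hx : x ⬝ᵥ A *ᵥ x = ∑ i, hA.eigenvalues i * ((star U *ᵥ x) i) ^ 2 := by
    conv_lhs => rw [hspec]
    exact quad_diag_eq U _ x
  have hxx : x ⬝ᵥ x = ∑ i, ((star U *ᵥ x) i) ^ 2 := by
    rw [← dot_self_unitary (U := U) hA.eigenvectorUnitary.2 x]
    simp [dotProduct, sq]
  rw [hx, hxx, Finset.mul_sum]
  exact Finset.sum_le_sum fun i _ =>
    mul_le_mul_of_nonneg_right (hc i) (sq_nonneg _)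

/-- inverse quadratic form bound for positive definite matrices -/
private lemma inv_quad_bound {M : Matrix (Fin m) (Fin m) ℝ} (hM : M.PosDef)
    [NeZero m] (x : Fin m → ℝ) :
    x ⬝ᵥ x ≤ (⨆ i, hM.1.eigenvalues i) * (x ⬝ᵥ M⁻¹ *ᵥ x) := by
  haveI : Nonempty (Fin m) := ⟨⟨0, Nat.pos_of_ne_zero (NeZero.ne m)⟩⟩
  set U : Matrix (Fin m) (Fin m) ℝ := ↑hM.1.eigenvectorUnitary with hUdef
  set ev := hM.1.eigenvalues with hev
  have hevpos : ∀ i, 0 < ev i := hM.eigenvalues_pos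
  have hspec := hM.1.spectral_theorem
  rw [ofReal_comp] at hspec
  have hinv : M⁻¹ = U * Matrix.diagonal (fun i => (ev i)⁻¹) * star U := by
    apply Matrix.inv_eq_right_inv
    conv_lhs => rw [hspec]
    have hUU : star U * U = 1 := Matrix.mem_unitaryGroup_iff'.mp hM.1.eigenvectorUnitary.2
    have hUU' : U * star U = 1 := Matrix.mem_unitaryGroup_iff.mp hM.1.eigenvectorUnitary.2
    have hdd : Matrix.diagonal ev * Matrix.diagonal (fun i => (ev i)⁻¹) = 1 := by
      rw [Matrix.diagonal_mul_diagonal,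
        show (fun i => ev i * (ev i)⁻¹) = fun _ => (1:ℝ) from
          funext fun i => mul_inv_cancel₀ (hevpos i).ne', Matrix.diagonal_one]
    calc (U * Matrix.diagonal ev * star U) * (U * Matrix.diagonal (fun i => (ev i)⁻¹) * star U)
        = U * Matrix.diagonal ev * (star U * U) * Matrix.diagonal (fun i => (ev i)⁻¹) * star U := by
          simp only [Matrix.mul_assoc]
      _ = U * (Matrix.diagonal ev * Matrix.diagonal (fun i => (ev i)⁻¹)) * star U := by
          rw [hUU]; simp only [Matrix.mul_one, Matrix.mul_assoc]
      _ = 1 := by rw [hdd, Matrix.mul_one, hUU']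
  have hsup : ∀ i, ev i ≤ ⨆ j, ev j := fun i =>
    le_ciSup (Set.Finite.bddAbove (Set.finite_range ev)) i
  have hq : x ⬝ᵥ M⁻¹ *ᵥ x = ∑ i, (ev i)⁻¹ * ((star U *ᵥ x) i) ^ 2 := by
    rw [hinv]; exact quad_diag_eq U _ x
  have hxx : x ⬝ᵥ x = ∑ i, ((star U *ᵥ x) i) ^ 2 := by
    rw [← dot_self_unitary (U := U) hM.1.eigenvectorUnitary.2 x]
    simp [dotProduct, sq]
  rw [hq, hxx, Finset.mul_sum]
  refine Finset.sum_le_sum fun i _ => ?_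
  calc ((star U *ᵥ x) i) ^ 2 = ev i * ((ev i)⁻¹ * ((star U *ᵥ x) i) ^ 2) := by
        rw [← mul_assoc, mul_inv_cancel₀ (hevpos i).ne', one_mul]
    _ ≤ (⨆ j, ev j) * ((ev i)⁻¹ * ((star U *ᵥ x) i) ^ 2) :=
        mul_le_mul_of_nonneg_right (hsup i)
          (mul_nonneg (inv_nonneg.mpr (hevpos i).le) (sq_nonneg _))

end Aux

theorem opnorm_sq_bound_AinvBt {n N : ℕ} (hn : 0 < n) (hN : 0 < N)
    (A₁ : Matrix (Fin n) (Fin n) ℝ) (M : Matrix (Fin N) (Fin N) ℝ)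
    (B : Matrix (Fin N) (Fin n) ℝ) (d : ℝ)
    (hA₁ : A₁.PosDef) (hM : M.PosDef) (hd : 0 < d)
    (hbound : ∀ u : Fin n → ℝ,
      u ⬝ᵥ (Bᵀ * M⁻¹ * B).mulVec u ≤ d * (u ⬝ᵥ A₁.mulVec u)) :
    ∀ z : Fin N → ℝ,
      ((A₁⁻¹ * Bᵀ).mulVec z) ⬝ᵥ ((A₁⁻¹ * Bᵀ).mulVec z) ≤
        (d * (⨆ i, hM.1.eigenvalues i) / (⨅ i, hA₁.1.eigenvalues i)) * (z ⬝ᵥ z) := by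
  haveI : NeZero N := ⟨hN.ne'⟩
  haveI : Nonempty (Fin n) := ⟨⟨0, hn⟩⟩
  haveI : Nonempty (Fin N) := ⟨⟨0, hN⟩⟩
  intro z
  set u : Fin n → ℝ := (A₁⁻¹ * Bᵀ).mulVec z with hu
  set w : Fin N → ℝ := B *ᵥ u with hw
  set lmin : ℝ := ⨅ i, hA₁.1.eigenvalues i with hlmin
  set lmax : ℝ := ⨆ i, hM.1.eigenvalues i with hlmax
  -- positivity of lmin and lmax
  have hlmin_le : ∀ i, lmin ≤ hA₁.1.eigenvalues i := fun i =>
    ciInf_le (Set.Finite.bddBelow (Set.finite_range _)) i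
  have hlmin_pos : 0 < lmin := by
    obtain ⟨i₀, hi₀⟩ := Finite.exists_min hA₁.1.eigenvalues
    exact lt_of_lt_of_le (hA₁.eigenvalues_pos i₀) (le_ciInf hi₀)
  have hlmax_pos : 0 < lmax := by
    refine lt_of_lt_of_le (hM.eigenvalues_pos (Classical.arbitrary _)) ?_
    exact le_ciSup (Set.Finite.bddAbove (Set.finite_range _)) _
  -- A₁ *ᵥ u = Bᵀ *ᵥ z
  have hdet : IsUnit A₁.det := isUnit_iff_ne_zero.mpr hA₁.det_pos.ne'
  have hAu : A₁ *ᵥ u = Bᵀ *ᵥ z := by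
    rw [hu, Matrix.mulVec_mulVec, ← Matrix.mul_assoc,
      Matrix.mul_nonsing_inv A₁ hdet, Matrix.one_mul]
  -- u ⬝ᵥ A₁ u = w ⬝ᵥ z
  have h1 : u ⬝ᵥ A₁ *ᵥ u = w ⬝ᵥ z := by
    rw [hAu, Matrix.dotProduct_mulVec, Matrix.vecMul_transpose, ← hw]
  -- quadratic bound from hbound
  have h2 : w ⬝ᵥ M⁻¹ *ᵥ w ≤ d * (u ⬝ᵥ A₁ *ᵥ u) := by
    have := hbound u
    rwa [show (Bᵀ * M⁻¹ * B).mulVec u = Bᵀ *ᵥ (M⁻¹ *ᵥ (B *ᵥ u)) by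
        simp only [Matrix.mulVec_mulVec, Matrix.mul_assoc],
      Matrix.dotProduct_mulVec u Bᵀ, Matrix.vecMul_transpose, ← hw] at this
  -- w ⬝ᵥ w ≤ lmax * (w M⁻¹ w)
  have h3 : w ⬝ᵥ w ≤ lmax * (w ⬝ᵥ M⁻¹ *ᵥ w) := inv_quad_bound hM w
  -- lower bound on u A₁ u
  have h4 : lmin * (u ⬝ᵥ u) ≤ u ⬝ᵥ A₁ *ᵥ u := quad_lower hA₁.1 hlmin_le u
  have huu_nonneg : (0:ℝ) ≤ u ⬝ᵥ u := Finset.sum_nonneg fun i _ => mul_self_nonneg (u i)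
  have hzz_nonneg : (0:ℝ) ≤ z ⬝ᵥ z := Finset.sum_nonneg fun i _ => mul_self_nonneg (z i)
  -- Cauchy-Schwarz
  have hCS : (w ⬝ᵥ z) ^ 2 ≤ (w ⬝ᵥ w) * (z ⬝ᵥ z) := by
    have := Finset.sum_mul_sq_le_sq_mul_sq Finset.univ w z
    simpa [dotProduct, sq] using this
  -- key bound
  have hkey : u ⬝ᵥ A₁ *ᵥ u ≤ d * lmax * (z ⬝ᵥ z) := by
    rcases le_or_gt (w ⬝ᵥ z) 0 with hs | hs
    · calc u ⬝ᵥ A₁ *ᵥ u = w ⬝ᵥ z := h1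
        _ ≤ 0 := hs
        _ ≤ d * lmax * (z ⬝ᵥ z) := by positivity
    · have hww : w ⬝ᵥ w ≤ d * lmax * (w ⬝ᵥ z) := by
        calc w ⬝ᵥ w ≤ lmax * (w ⬝ᵥ M⁻¹ *ᵥ w) := h3
          _ ≤ lmax * (d * (u ⬝ᵥ A₁ *ᵥ u)) :=
              mul_le_mul_of_nonneg_left h2 hlmax_pos.le
          _ = d * lmax * (w ⬝ᵥ z) := by rw [h1]; ring
      have hsq : (w ⬝ᵥ z) * (w ⬝ᵥ z) ≤ (d * lmax * (z ⬝ᵥ z)) * (w ⬝ᵥ z) := by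
        nlinarith [hCS, hww, hs, hzz_nonneg, hlmax_pos, hd]
      have := le_of_mul_le_mul_right hsq hs
      rw [h1]; exact this
  -- conclude
  rw [div_mul_eq_mul_div, le_div_iff₀ hlmin_pos]
  calc (u ⬝ᵥ u) * lmin = lmin * (u ⬝ᵥ u) := mul_comm _ _
    _ ≤ u ⬝ᵥ A₁ *ᵥ u := h4
    _ ≤ d * lmax * (z ⬝ᵥ z) := hkey
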